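/- Let u, v ∈ [0,1]. If either (u ≤ 1 and v ≤ 1) then q(u+v) + q(uv) ≤ q(u) + q(v), where q(x) = x(2−x) for x ≤ 1 and q(x) = 1 for x > 1. (The potential q is non-increasing under the extremal polarization combining step.) -/
import Mathlib

noncomputable def q (x : ℝ) : ℝ := if x ≤ 1 then x * (2 - x) else 1

theorem potential_nonincreasing (u v : ℝ) (hu : u ∈ Set.Icc (0:ℝ) 1)
    (hv : v ∈ Set.Icc (0:ℝ) 1) :
    q (u + v) + q (u * v) ≤ q u + q v := by
  obtain ⟨hu0, hu1⟩ := hu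
  obtain ⟨hv0, hv1⟩ := hv
  have huv : u * v ≤ 1 := by nlinarith
  rw [q, q, q, q, if_pos hu1, if_pos hv1, if_pos huv]
  by_cases h : u + v ≤ 1
  · rw [if_pos h]; nlinarith [sq_nonneg (u*v)]
  · rw [if_neg h]
    nlinarith [mul_nonneg (sub_nonneg.2 hu1) (sub_nonneg.2 hv1), sq_nonneg (u+v-1), mul_nonneg hu0 hv0]
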